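/- For any c > 0, the function f(t) = (1 + c - (c^t + c^{1-t})) / (t(1-t)) is decreasing on (0, 1/2) and increasing on (1/2, 1). -/

import Mathlib

open Real Set

lemma sinh_le_mul_cosh {y : ℝ} (hy : 0 ≤ y) : Real.sinh y ≤ y * Real.cosh y := by
  have h : MonotoneOn (fun y => y * Real.cosh y - Real.sinh y) (Set.Ici 0) := by
    apply monotoneOn_of_deriv_nonneg (convex_Ici 0)
    · fun_prop
    · apply Differentiable.differentiableOn; fun_prop
    · intro x hx
      rw [interior_Ici] at hx
      have hd : HasDerivAt (fun y => y * Real.cosh y - Real.sinh y) (x * Real.sinh x) x := by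
        have := ((hasDerivAt_id' (x := x)).mul (Real.hasDerivAt_cosh x)).sub (Real.hasDerivAt_sinh x)
        exact this.congr_deriv (by ring)
      rw [hd.deriv]
      exact mul_nonneg hx.le (Real.sinh_nonneg_iff.mpr hx.le)
  have := h (Set.self_mem_Ici) (by exact hy) hy
  simpa using this

lemma sinh_div_mono : MonotoneOn (fun y => Real.sinh y / y) (Set.Ioi 0) := by
  apply monotoneOn_of_deriv_nonneg (convex_Ioi 0)
  · exact Real.continuous_sinh.continuousOn.div continuousOn_id
      (fun x hx => ne_of_gt hx)
  · rw [interior_Ioi]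
    intro x hx
    exact (((Real.hasDerivAt_sinh x).div (hasDerivAt_id' (x := x))
      (ne_of_gt hx)).differentiableAt).differentiableWithinAt
  · intro x hx
    rw [interior_Ioi] at hx
    have hd := (Real.hasDerivAt_sinh x).div (hasDerivAt_id' (x := x)) (ne_of_gt hx)
    rw [show (fun y => Real.sinh y / y) = (Real.sinh / fun x => x) from rfl, hd.deriv]
    apply div_nonneg _ (by positivity)
    have h1 := sinh_le_mul_cosh hx.le
    simp only [id_eq, mul_one]
    nlinarith

lemma convexOn_cosh_sqrt : ConvexOn ℝ (Set.Ici 0) (fun A : ℝ => Real.cosh (Real.sqrt A)) := by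
  apply MonotoneOn.convexOn_of_deriv (convex_Ici 0)
  · exact Real.continuous_cosh.comp_continuousOn (continuous_sqrt.continuousOn)
  · rw [interior_Ici]
    intro A hA
    have hd : HasDerivAt (fun A : ℝ => Real.cosh (Real.sqrt A))
        (Real.sinh (Real.sqrt A) * (1 / (2 * Real.sqrt A))) A :=
      (Real.hasDerivAt_cosh (Real.sqrt A)).comp A (Real.hasDerivAt_sqrt (ne_of_gt hA))
    exact hd.differentiableAt.differentiableWithinAt
  · rw [interior_Ici]
    intro A hA B hB hAB
    have hdA : HasDerivAt (fun A : ℝ => Real.cosh (Real.sqrt A))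
        (Real.sinh (Real.sqrt A) * (1 / (2 * Real.sqrt A))) A :=
      (Real.hasDerivAt_cosh (Real.sqrt A)).comp A (Real.hasDerivAt_sqrt (ne_of_gt hA))
    have hdB : HasDerivAt (fun A : ℝ => Real.cosh (Real.sqrt A))
        (Real.sinh (Real.sqrt B) * (1 / (2 * Real.sqrt B))) B :=
      (Real.hasDerivAt_cosh (Real.sqrt B)).comp B (Real.hasDerivAt_sqrt (ne_of_gt (hA.trans_le hAB)))
    rw [hdA.deriv, hdB.deriv]
    have hsA : 0 < Real.sqrt A := Real.sqrt_pos.mpr hA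
    have hsB : 0 < Real.sqrt B := Real.sqrt_pos.mpr (hA.trans_le hAB)
    have := sinh_div_mono (Set.mem_Ioi.mpr hsA) (Set.mem_Ioi.mpr hsB)
      (Real.sqrt_le_sqrt hAB)
    simp only at this
    simp only [show ∀ x : ℝ, Real.sinh x * (1 / (2 * x)) = (Real.sinh x / x) / 2 from fun x => by ring]
    linarith

lemma keyK {b x y : ℝ} (hx : 0 ≤ x) (hxy : x ≤ y) (hyb : y < b) :
    (Real.cosh b - Real.cosh x) * (b ^ 2 - y ^ 2) ≤
      (Real.cosh b - Real.cosh y) * (b ^ 2 - x ^ 2) := by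
  have hy : 0 ≤ y := hx.trans hxy
  have hb : 0 < b := lt_of_le_of_lt hy hyb
  have hx2 : x ^ 2 < b ^ 2 := by nlinarith
  have hy2 : y ^ 2 < b ^ 2 := by nlinarith
  have hsec := convexOn_cosh_sqrt.secant_mono (a := b ^ 2) (x := x ^ 2) (y := y ^ 2)
    (Set.mem_Ici.mpr (by positivity)) (Set.mem_Ici.mpr (by positivity)) (Set.mem_Ici.mpr (by positivity)) (ne_of_lt hx2) (ne_of_lt hy2)
    (by nlinarith)
  simp only [Real.sqrt_sq hx, Real.sqrt_sq hy, Real.sqrt_sq hb.le] at hsec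
  have e1 : (Real.cosh x - Real.cosh b) / (x ^ 2 - b ^ 2) =
      (Real.cosh b - Real.cosh x) / (b ^ 2 - x ^ 2) := by
    rw [← neg_div_neg_eq]; ring_nf
  have e2 : (Real.cosh y - Real.cosh b) / (y ^ 2 - b ^ 2) =
      (Real.cosh b - Real.cosh y) / (b ^ 2 - y ^ 2) := by
    rw [← neg_div_neg_eq]; ring_nf
  rw [e1, e2, div_le_div_iff₀ (by nlinarith) (by nlinarith)] at hsec
  linarith

lemma heinz_N_eq (c : ℝ) (hc : 0 < c) (u : ℝ) :
    1 + c - (c ^ u + c ^ (1 - u)) =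
      2 * Real.exp (Real.log c / 2) *
        (Real.cosh (|Real.log c| / 2) - Real.cosh (|u - 1/2| * |Real.log c|)) := by
  have hcu : ∀ v : ℝ, c ^ v = Real.exp (v * Real.log c) := fun v => by
    rw [Real.rpow_def_of_pos hc, mul_comm]
  have hb : Real.cosh (|Real.log c| / 2) = Real.cosh (Real.log c / 2) := by
    rw [show |Real.log c| / 2 = |Real.log c / 2| by rw [abs_div]; norm_num, Real.cosh_abs]
  have hxx : Real.cosh (|u - 1/2| * |Real.log c|) = Real.cosh ((u - 1/2) * Real.log c) := by
    rw [← abs_mul, Real.cosh_abs]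
  rw [hb, hxx, hcu u, hcu (1 - u), Real.cosh_eq, Real.cosh_eq]
  have e0 : Real.exp (Real.log c) = c := Real.exp_log hc
  have e1 : Real.exp (Real.log c / 2) * Real.exp (Real.log c / 2) = Real.exp (Real.log c) := by
    rw [← Real.exp_add]; congr 1; ring
  have e2 : Real.exp (Real.log c / 2) * Real.exp (-(Real.log c / 2)) = 1 := by
    rw [← Real.exp_add]; simp
  have e3 : Real.exp (Real.log c / 2) * Real.exp ((u - 1/2) * Real.log c)
      = Real.exp (u * Real.log c) := by
    rw [← Real.exp_add]; congr 1; ring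
  have e4 : Real.exp (Real.log c / 2) * Real.exp (-((u - 1/2) * Real.log c))
      = Real.exp ((1 - u) * Real.log c) := by
    rw [← Real.exp_add]; congr 1; ring
  linear_combination -e0 - e1 - e2 + e3 + e4

lemma heinz_key (c : ℝ) (hc : 0 < c) (hc1 : c ≠ 1) {s t : ℝ}
    (hs0 : 0 < s) (hs1 : s < 1) (ht0 : 0 < t) (ht1 : t < 1)
    (habs : |t - 1/2| ≤ |s - 1/2|) :
    (1 + c - (c ^ t + c ^ (1 - t))) / (t * (1 - t)) ≤
      (1 + c - (c ^ s + c ^ (1 - s))) / (s * (1 - s)) := by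
  have hm : 0 < |Real.log c| := abs_pos.mpr (Real.log_ne_zero_of_pos_of_ne_one hc hc1)
  have hDs : 0 < s * (1 - s) := by nlinarith
  have hDt : 0 < t * (1 - t) := by nlinarith
  have hL0 : Real.log c ≠ 0 := Real.log_ne_zero_of_pos_of_ne_one hc hc1
  have hDs' : s * (1 - s) = ((|Real.log c| / 2) ^ 2 - (|s - 1/2| * |Real.log c|) ^ 2)
      / |Real.log c| ^ 2 := by
    rw [mul_pow, sq_abs, sq_abs, show |Real.log c| / 2 = |Real.log c / 2| by
      rw [abs_div]; norm_num, sq_abs]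
    field_simp
    ring
  have hDt' : t * (1 - t) = ((|Real.log c| / 2) ^ 2 - (|t - 1/2| * |Real.log c|) ^ 2)
      / |Real.log c| ^ 2 := by
    rw [mul_pow, sq_abs, sq_abs, show |Real.log c| / 2 = |Real.log c / 2| by
      rw [abs_div]; norm_num, sq_abs]
    field_simp
    ring
  rw [div_le_div_iff₀ hDt hDs, heinz_N_eq c hc s, heinz_N_eq c hc t, hDs', hDt']
  have hxs : |s - 1/2| * |Real.log c| < |Real.log c| / 2 := by
    have h1 : |s - 1/2| < 1/2 := abs_lt.mpr ⟨by linarith, by linarith⟩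
    nlinarith
  have hkey := keyK (b := |Real.log c| / 2) (x := |t - 1/2| * |Real.log c|)
    (y := |s - 1/2| * |Real.log c|) (by positivity)
    (mul_le_mul_of_nonneg_right habs (abs_nonneg _)) hxs
  have hE : (0:ℝ) ≤ 2 * Real.exp (Real.log c / 2) / |Real.log c| ^ 2 := by positivity
  calc 2 * Real.exp (Real.log c / 2) *
        (Real.cosh (|Real.log c| / 2) - Real.cosh (|t - 1/2| * |Real.log c|)) *
        (((|Real.log c| / 2) ^ 2 - (|s - 1/2| * |Real.log c|) ^ 2) / |Real.log c| ^ 2)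
      = (2 * Real.exp (Real.log c / 2) / |Real.log c| ^ 2) *
        ((Real.cosh (|Real.log c| / 2) - Real.cosh (|t - 1/2| * |Real.log c|)) *
          ((|Real.log c| / 2) ^ 2 - (|s - 1/2| * |Real.log c|) ^ 2)) := by ring
    _ ≤ (2 * Real.exp (Real.log c / 2) / |Real.log c| ^ 2) *
        ((Real.cosh (|Real.log c| / 2) - Real.cosh (|s - 1/2| * |Real.log c|)) *
          ((|Real.log c| / 2) ^ 2 - (|t - 1/2| * |Real.log c|) ^ 2)) :=
        mul_le_mul_of_nonneg_left hkey hE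
    _ = 2 * Real.exp (Real.log c / 2) *
        (Real.cosh (|Real.log c| / 2) - Real.cosh (|s - 1/2| * |Real.log c|)) *
        (((|Real.log c| / 2) ^ 2 - (|t - 1/2| * |Real.log c|) ^ 2) / |Real.log c| ^ 2) := by
        ring

theorem heinz_f_monotone (c : ℝ) (hc : 0 < c) :
    AntitoneOn (fun t : ℝ => (1 + c - (c ^ t + c ^ (1 - t))) / (t * (1 - t)))
      (Set.Ioo (0:ℝ) (1/2)) ∧
    MonotoneOn (fun t : ℝ => (1 + c - (c ^ t + c ^ (1 - t))) / (t * (1 - t)))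
      (Set.Ioo ((1:ℝ)/2) 1) := by
  rcases eq_or_ne c 1 with rfl | hc1
  · constructor <;> intro s hs t ht hst <;> simp
  constructor
  · rintro s ⟨hs0, hs1⟩ t ⟨ht0, ht1⟩ hst
    exact heinz_key c hc hc1 hs0 (by linarith) ht0 (by linarith)
      (by rw [abs_of_neg (by linarith), abs_of_neg (by linarith)]; linarith)
  · rintro s ⟨hs0, hs1⟩ t ⟨ht0, ht1⟩ hst
    exact heinz_key c hc hc1 (by linarith) ht1 (by linarith) hs1
      (by rw [abs_of_pos (by linarith), abs_of_pos (by linarith)]; linarith)
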